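/- Let τ = Σ_{i,j} τ_{ij} (E_{ij} ⊗ E_{ij}) be a maximally correlated state on ℂ^n ⊗ ℂ^n. Then the trace norm of its partial transpose satisfies ‖τ^Γ‖₁ = Σ_{i,j} |τ_{ij}|, and hence the negativity of τ equals N(τ) = (Σ_{i,j} |τ_{ij}| − 1)/2. -/

import Mathlib

open scoped Kronecker ComplexOrder
open Matrix

noncomputable def Matrix.PosSemidef.sqrt {𝕜 : Type*} [RCLike 𝕜] {n : Type*} [Fintype n]
    [DecidableEq n] {A : Matrix n n 𝕜} (hA : A.PosSemidef) : Matrix n n 𝕜 :=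
  hA.1.eigenvectorUnitary.1 * diagonal ((↑) ∘ (√·) ∘ hA.1.eigenvalues) *
  (star hA.1.eigenvectorUnitary : Matrix n n 𝕜)

noncomputable def traceNorm {ι : Type*} [Fintype ι] [DecidableEq ι] (A : Matrix ι ι ℂ) : ℝ :=
  ((Matrix.posSemidef_conjTranspose_mul_self A).sqrt.trace).re

noncomputable def l1Norm {ι κ : Type*} [Fintype ι] [Fintype κ] (A : Matrix ι κ ℂ) : ℝ :=
  ∑ i, ∑ j, ‖A i j‖

def ptranspose {α β : Type*} (ρ : Matrix (α × β) (α × β) ℂ) : Matrix (α × β) (α × β) ℂ :=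
  Matrix.of fun p q => ρ (p.1, q.2) (q.1, p.2)

noncomputable def negativity {α β : Type*} [Fintype α] [Fintype β] [DecidableEq α] [DecidableEq β]
    (ρ : Matrix (α × β) (α × β) ℂ) : ℝ :=
  (traceNorm (ptranspose ρ) - 1) / 2

def matUnit {ι : Type*} [DecidableEq ι] (i j : ι) : Matrix ι ι ℂ :=
  Matrix.single i j 1

noncomputable def mcs {n : ℕ} (t : Fin n → Fin n → ℂ) :
    Matrix (Fin n × Fin n) (Fin n × Fin n) ℂ :=
  ∑ i, ∑ j, t i j • (matUnit i j ⊗ₖ matUnit i j)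

def blockOf {m n : ℕ} (ρ : Matrix (Fin m × Fin n) (Fin m × Fin n) ℂ) (i j : Fin m) :
    Matrix (Fin n) (Fin n) ℂ :=
  Matrix.of fun k l => ρ (i, k) (j, l)

noncomputable def conjU {m n : ℕ} (U : Matrix.unitaryGroup (Fin m) ℂ)
    (ρ : Matrix (Fin m × Fin n) (Fin m × Fin n) ℂ) : Matrix (Fin m × Fin n) (Fin m × Fin n) ℂ :=
  ((U : Matrix (Fin m) (Fin m) ℂ) ⊗ₖ (1 : Matrix (Fin n) (Fin n) ℂ))ᴴ * ρ *
    ((U : Matrix (Fin m) (Fin m) ℂ) ⊗ₖ (1 : Matrix (Fin n) (Fin n) ℂ))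

noncomputable def conjUV {m n : ℕ} (U : Matrix.unitaryGroup (Fin m) ℂ)
    (V : Matrix.unitaryGroup (Fin n) ℂ)
    (ρ : Matrix (Fin m × Fin n) (Fin m × Fin n) ℂ) : Matrix (Fin m × Fin n) (Fin m × Fin n) ℂ :=
  ((U : Matrix (Fin m) (Fin m) ℂ) ⊗ₖ (V : Matrix (Fin n) (Fin n) ℂ))ᴴ * ρ *
    ((U : Matrix (Fin m) (Fin m) ℂ) ⊗ₖ (V : Matrix (Fin n) (Fin n) ℂ))

noncomputable def QNA {m n : ℕ} (ρ : Matrix (Fin m × Fin n) (Fin m × Fin n) ℂ) : ℝ :=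
  ⨅ U : Matrix.unitaryGroup (Fin m) ℂ,
    ((∑ i, ∑ j, traceNorm (blockOf (conjU U ρ) i j)) - 1) / 2

noncomputable def QNAB {m n : ℕ} (ρ : Matrix (Fin m × Fin n) (Fin m × Fin n) ℂ) : ℝ :=
  ⨅ U : Matrix.unitaryGroup (Fin m) ℂ, ⨅ V : Matrix.unitaryGroup (Fin n) ℂ,
    (l1Norm (conjUV U V ρ) - 1) / 2

-- scratch lemmas
lemma mcs_apply {n : ℕ} (t : Fin n → Fin n → ℂ) (a b c d : Fin n) :
    mcs t (a,b) (c,d) = if a = b ∧ c = d then t a c else 0 := by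
  simp only [mcs, Matrix.sum_apply, Matrix.smul_apply, Matrix.kroneckerMap_apply, matUnit,
    Matrix.single, Matrix.of_apply, smul_eq_mul]
  by_cases h1 : a = b <;> by_cases h2 : c = d
  · subst h1; subst h2; simp [ite_and, Finset.sum_ite_eq']
  · simp only [h2, and_false, if_false]
    apply Finset.sum_eq_zero; intro i _; apply Finset.sum_eq_zero; intro j _
    by_cases hia : i = a <;> by_cases hjc : j = c <;> aesop
  · simp only [h1, false_and, if_false]
    apply Finset.sum_eq_zero; intro i _; apply Finset.sum_eq_zero; intro j _
    by_cases hia : i = a <;> by_cases hjc : j = c <;> aesop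
  · simp only [h1, false_and, if_false]
    apply Finset.sum_eq_zero; intro i _; apply Finset.sum_eq_zero; intro j _
    by_cases hia : i = a <;> by_cases hjc : j = c <;> aesop

lemma pt_apply {n : ℕ} (t : Fin n → Fin n → ℂ) (a b c d : Fin n) :
    ptranspose (mcs t) (a,b) (c,d) = if a = d ∧ c = b then t a c else 0 := by
  simp [ptranspose, mcs_apply]

lemma key {n : ℕ} (t : Fin n → Fin n → ℂ) :
    (ptranspose (mcs t))ᴴ * (ptranspose (mcs t)) =
      Matrix.diagonal (fun p : Fin n × Fin n => ((‖t p.2 p.1‖ : ℂ))^2) := by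
  ext ⟨b, d⟩ ⟨b', d'⟩
  simp only [Matrix.mul_apply, Matrix.conjTranspose_apply, Matrix.diagonal_apply]
  rw [Fintype.sum_prod_type]
  simp only [pt_apply]
  by_cases hb : b = b' <;> by_cases hd : d = d'
  · subst hb; subst hd
    simp only [Prod.mk.injEq, and_self, if_true]
    rw [Finset.sum_eq_single d]
    · rw [Finset.sum_eq_single b]
      · simp only [eq_self_iff_true, and_self, if_true]
        rw [show (star (t d b) * t d b) = (starRingEnd ℂ) (t d b) * t d b from rfl,
          ← Complex.normSq_eq_conj_mul_self]
        exact_mod_cast (Complex.sq_norm (t d b)).symm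
      · intro c _ hc; simp [hc, Ne.symm hc]
      · simp
    · intro a _ ha
      apply Finset.sum_eq_zero; intro c _
      simp [ha, Ne.symm ha]
    · simp
  · have : ¬ ((b,d) = (b',d')) := by simp [hd]
    rw [if_neg this]
    apply Finset.sum_eq_zero; intro a _; apply Finset.sum_eq_zero; intro c _
    by_cases h1 : a = d <;> by_cases h2 : c = b <;> by_cases h3 : a = d' <;> aesop
  · have : ¬ ((b,d) = (b',d')) := by simp [hb]
    rw [if_neg this]
    apply Finset.sum_eq_zero; intro a _; apply Finset.sum_eq_zero; intro c _
    by_cases h1 : a = d <;> by_cases h2 : c = b <;> by_cases h3 : c = b' <;> aesop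
  · have : ¬ ((b,d) = (b',d')) := by simp [hb]
    rw [if_neg this]
    apply Finset.sum_eq_zero; intro a _; apply Finset.sum_eq_zero; intro c _
    by_cases h1 : a = d <;> by_cases h2 : c = b <;> by_cases h3 : c = b' <;> aesop

open scoped MatrixOrder in
lemma psd_sqrt_eq {ι : Type*} [Fintype ι] [DecidableEq ι] {A : Matrix ι ι ℂ}
    (hA : A.PosSemidef) : hA.sqrt = CFC.sqrt A := by
  rw [CFC.sqrt_eq_real_sqrt A (Matrix.nonneg_iff_posSemidef.mpr hA), cfcₙ_eq_cfc, hA.1.cfc_eq,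
    IsHermitian.cfc, Matrix.PosSemidef.sqrt]
  rfl

open scoped MatrixOrder in
lemma sqrt_eq {n : ℕ} (t : Fin n → Fin n → ℂ) :
    (Matrix.posSemidef_conjTranspose_mul_self (ptranspose (mcs t))).sqrt =
      Matrix.diagonal (fun p : Fin n × Fin n => ((‖t p.2 p.1‖ : ℂ))) := by
  rw [psd_sqrt_eq]
  refine CFC.sqrt_unique ?_ ?_
  · rw [Matrix.diagonal_mul_diagonal, key]
    ext p q
    simp [Matrix.diagonal_apply, sq]
  · rw [Matrix.nonneg_iff_posSemidef, Matrix.posSemidef_diagonal_iff]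
    intro p
    exact Complex.zero_le_real.mpr (norm_nonneg _)

/-- trace norm of the partial transpose, and negativity, of a
maximally correlated state. -/
theorem stmt_1 {n : ℕ} (t : Fin n → Fin n → ℂ)
    (hpos : (mcs t).PosSemidef) (htr : (mcs t).trace = 1) :
    traceNorm (ptranspose (mcs t)) = ∑ i, ∑ j, ‖t i j‖ ∧
    negativity (mcs t) = ((∑ i, ∑ j, ‖t i j‖) - 1) / 2 := by
  have h1 : traceNorm (ptranspose (mcs t)) = ∑ i, ∑ j, ‖t i j‖ := by
    rw [traceNorm, sqrt_eq, Matrix.trace_diagonal, Fintype.sum_prod_type,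
      Complex.re_sum]
    simp only [Complex.re_sum, Complex.ofReal_re]
    exact Finset.sum_comm
  exact ⟨h1, by rw [negativity, h1]⟩
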